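/- arXiv:1702.06175 — 4 statements merged into one kernel-verified Lean document; each statement's English description precedes it below -/
import Mathlib

section
/- Let K ⊆ ℝ^n be a nonempty closed convex set, x ∈ K, ε > 0, and set E(ε) = {z ∈ K : ‖z − x‖₂ ≤ ε}. Let G : ℝ^n → ℝ^n be a map and α, β > 0 be such that the regularity condition ⟨G(z), z − x⟩ ≥ (1/α)‖z − x‖₂² + (1/β)‖G(z)‖₂² holds for all z ∈ E(ε). Then for any step size μ with 0 < μ ≤ 2/β and any z₀ ∈ E(ε), the iterates z_{τ+1} = P_K(z_τ − μ G(z_τ)), where P_K is the metric projection onto K, satisfy z_τ ∈ E(ε) and ‖z_τ − x‖₂² ≤ (1 − 2μ/α)^τ ‖z₀ − x‖₂² for all τ ≥ 0. -/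
open MeasureTheory ProbabilityTheory Real
open scoped ENNReal RealInnerProductSpace BigOperators

/-- The standard Gaussian measure `N(0, I_n)` on `ℝ^n`. -/
noncomputable def stdGaussian (n : ℕ) : Measure (EuclideanSpace ℝ (Fin n)) :=
  (Measure.pi fun _ : Fin n => gaussianReal 0 1).map
    (MeasurableEquiv.toLp 2 (Fin n → ℝ))

/-- Gaussian width `ω(T) = E[sup_{z ∈ T} ⟨g, z⟩]`, `g ∼ N(0, I_n)`. -/
noncomputable def gaussianWidth {n : ℕ} (T : Set (EuclideanSpace ℝ (Fin n))) : ℝ :=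
  ∫ g, sSup ((fun z => ⟪g, z⟫) '' T) ∂(stdGaussian n)

/-- Joint law of `m` independent `N(0, I_n)` measurement vectors. -/
noncomputable def vecMeas (n m : ℕ) : Measure (Fin m → EuclideanSpace ℝ (Fin n)) :=
  Measure.pi fun _ => stdGaussian n

/-- `C` is a cone: closed under multiplication by nonnegative scalars. -/
def IsCone {n : ℕ} (C : Set (EuclideanSpace ℝ (Fin n))) : Prop :=
  ∀ t : ℝ, 0 ≤ t → ∀ h ∈ C, t • h ∈ C

/-- `dist(z, x) = min(‖z − x‖₂, ‖z + x‖₂)`. -/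
noncomputable def pdist {n : ℕ} (z x : EuclideanSpace ℝ (Fin n)) : ℝ :=
  min ‖z - x‖ ‖z + x‖

/-- `p` is a nearest point of the set `K` to `v` (a metric projection of `v` onto `K`). -/
def NearestPt {n : ℕ} (K : Set (EuclideanSpace ℝ (Fin n)))
    (v p : EuclideanSpace ℝ (Fin n)) : Prop :=
  p ∈ K ∧ ∀ w ∈ K, ‖v - p‖ ≤ ‖v - w‖

/-- `sgn(t) = 1` if `t ≥ 0` and `−1` otherwise. -/
noncomputable def sgn (t : ℝ) : ℝ := if 0 ≤ t then 1 else -1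

lemma proj_contract {n : ℕ} {K : Set (EuclideanSpace ℝ (Fin n))} (hKcvx : Convex ℝ K)
    {v p x : EuclideanSpace ℝ (Fin n)} (hx : x ∈ K)
    (hp : p ∈ K) (hmin : ∀ w ∈ K, ‖v - p‖ ≤ ‖v - w‖) : ‖p - x‖ ≤ ‖v - x‖ := by
  haveI : Nonempty K := ⟨⟨p, hp⟩⟩
  have hinf : ‖v - p‖ = ⨅ w : K, ‖v - w‖ := by
    refine le_antisymm (le_ciInf fun w => hmin w w.2) ?_
    exact ciInf_le ⟨0, fun _ ⟨_, h⟩ => h ▸ norm_nonneg _⟩ (⟨p, hp⟩ : K)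
  have hvar : ∀ w ∈ K, ⟪v - p, w - p⟫ ≤ 0 :=
    (norm_eq_iInf_iff_real_inner_le_zero hKcvx hp).mp hinf
  have h1 : ⟪v - p, x - p⟫ ≤ 0 := hvar x hx
  have h2 : ‖p - x‖ ^ 2 ≤ ⟪v - x, p - x⟫ := by
    have : ⟪p - x, p - x⟫ = ⟪p - v, p - x⟫ + ⟪v - x, p - x⟫ := by
      rw [← inner_add_left]; congr 1; abel
    have h3 : ⟪p - v, p - x⟫ = ⟪v - p, x - p⟫ := by
      rw [show p - v = -(v - p) by abel, show p - x = -(x - p) by abel, inner_neg_neg]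
    rw [real_inner_self_eq_norm_sq] at this
    linarith [this, h3 ▸ h1]
  have h4 : ⟪v - x, p - x⟫ ≤ ‖v - x‖ * ‖p - x‖ := real_inner_le_norm _ _
  nlinarith [norm_nonneg (p - x), norm_nonneg (v - x)]

/-- Lemma: convergence of projected gradient descent under the regularity
condition. -/
theorem statement2 (n : ℕ) (K : Set (EuclideanSpace ℝ (Fin n))) (hKne : K.Nonempty)
    (hKcl : IsClosed K) (hKcvx : Convex ℝ K)
    (x : EuclideanSpace ℝ (Fin n)) (hx : x ∈ K) (ε : ℝ) (hε : 0 < ε)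
    (G : EuclideanSpace ℝ (Fin n) → EuclideanSpace ℝ (Fin n))
    (α β : ℝ) (hα : 0 < α) (hβ : 0 < β)
    -- regularity condition on `E(ε) = {z ∈ K : ‖z − x‖ ≤ ε}`
    (hreg : ∀ z ∈ K, ‖z - x‖ ≤ ε →
      ⟪G z, z - x⟫ ≥ (1 / α) * ‖z - x‖ ^ 2 + (1 / β) * ‖G z‖ ^ 2)
    (μ : ℝ) (hμ0 : 0 < μ) (hμ : μ ≤ 2 / β)
    (z : ℕ → EuclideanSpace ℝ (Fin n))
    (hz0K : z 0 ∈ K) (hz0 : ‖z 0 - x‖ ≤ ε)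
    -- iterates `z_{τ+1} = P_K(z_τ − μ G(z_τ))`
    (hiter : ∀ τ : ℕ, NearestPt K (z τ - μ • G (z τ)) (z (τ + 1))) :
    ∀ τ : ℕ, (z τ ∈ K ∧ ‖z τ - x‖ ≤ ε) ∧
      ‖z τ - x‖ ^ 2 ≤ (1 - 2 * μ / α) ^ τ * ‖z 0 - x‖ ^ 2 := by
  -- key step estimate
  have key : ∀ w ∈ K, ‖w - x‖ ≤ ε →
      ‖(w - μ • G w) - x‖ ^ 2 ≤ (1 - 2 * μ / α) * ‖w - x‖ ^ 2 := by
    intro w hwK hwε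
    have hr := hreg w hwK hwε
    have hexp : ‖(w - μ • G w) - x‖ ^ 2
        = ‖w - x‖ ^ 2 - 2 * (μ * ⟪G w, w - x⟫) + μ ^ 2 * ‖G w‖ ^ 2 := by
      have hv : (w - μ • G w) - x = (w - x) - μ • G w := by abel
      rw [hv, norm_sub_sq_real, real_inner_smul_right, real_inner_comm, norm_smul,
        Real.norm_eq_abs, abs_of_pos hμ0]
      ring
    have h1 : 2 * μ * ((1 / α) * ‖w - x‖ ^ 2 + (1 / β) * ‖G w‖ ^ 2)
        ≤ 2 * μ * ⟪G w, w - x⟫ :=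
      mul_le_mul_of_nonneg_left hr (by positivity)
    have h4 : μ ^ 2 ≤ 2 * μ * (1 / β) := by
      have h3 : μ * μ ≤ μ * (2 / β) := mul_le_mul_of_nonneg_left hμ hμ0.le
      calc μ ^ 2 = μ * μ := sq μ
        _ ≤ μ * (2 / β) := h3
        _ = 2 * μ * (1 / β) := by ring
    have h2 : μ ^ 2 * ‖G w‖ ^ 2 ≤ 2 * μ * ((1 / β) * ‖G w‖ ^ 2) := by
      calc μ ^ 2 * ‖G w‖ ^ 2 ≤ (2 * μ * (1 / β)) * ‖G w‖ ^ 2 :=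
            mul_le_mul_of_nonneg_right h4 (sq_nonneg _)
        _ = 2 * μ * ((1 / β) * ‖G w‖ ^ 2) := by ring
    have hrhs : (1 - 2 * μ / α) * ‖w - x‖ ^ 2
        = ‖w - x‖ ^ 2 - 2 * μ * ((1 / α) * ‖w - x‖ ^ 2) := by ring
    rw [hexp, hrhs]
    linarith
  by_cases hz0x : z 0 = x
  · -- degenerate case: start at x, stay at x
    have hfix : ∀ τ, z τ = x := by
      intro τ
      induction τ with
      | zero => exact hz0x
      | succ k ih =>
        have hGx : G x = 0 := by
          have hr := hreg x hx (by simp [hε.le])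
          have : (1 / β) * ‖G x‖ ^ 2 ≤ 0 := by
            simpa using hr
          have hn : ‖G x‖ = 0 := by
            by_contra h
            have hpos : 0 < ‖G x‖ := (norm_nonneg _).lt_of_ne (Ne.symm h)
            have := mul_pos (one_div_pos.mpr hβ) (pow_pos hpos 2)
            linarith
          simpa using hn
        have h := hiter k
        rw [ih, hGx] at h
        obtain ⟨hpK, hmin⟩ := h
        have : ‖(x - μ • (0 : EuclideanSpace ℝ (Fin n))) - z (k+1)‖ ≤ 0 := by
          simpa using hmin x hx
        have : x - z (k + 1) = 0 := by
          have := norm_le_zero_iff.mp (by simpa using this)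
          simpa using this
        have := sub_eq_zero.mp this
        exact this.symm
    intro τ
    refine ⟨⟨hfix τ ▸ hx, by simp [hfix τ, hε.le]⟩, by simp [hfix τ, hz0x]⟩
  · -- nondegenerate case: 0 ≤ 1 - 2μ/α
    have hc : 0 ≤ 1 - 2 * μ / α := by
      have ha : 0 < ‖z 0 - x‖ := by
        rwa [norm_pos_iff, sub_ne_zero]
      have hb : (0:ℝ) ≤ ‖G (z 0)‖ := norm_nonneg _
      have hr := hreg (z 0) hz0K hz0
      have hcs : ⟪G (z 0), z 0 - x⟫ ≤ ‖G (z 0)‖ * ‖z 0 - x‖ := real_inner_le_norm _ _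
      have hab : (1 / α) * ‖z 0 - x‖ ^ 2 + (1 / β) * ‖G (z 0)‖ ^ 2
          ≤ ‖G (z 0)‖ * ‖z 0 - x‖ := le_trans hr hcs
      have hbpos : 0 < ‖G (z 0)‖ := by
        rcases hb.lt_or_eq with hlt | heq
        · exact hlt
        · exfalso
          rw [← heq] at hab
          have h5 : (1 / α) * ‖z 0 - x‖ ^ 2 ≤ 0 := by simpa using hab
          have h6 : 0 < (1 / α) * ‖z 0 - x‖ ^ 2 :=
            mul_pos (one_div_pos.mpr hα) (pow_pos ha 2)
          linarith
      have hab' : β * ‖z 0 - x‖ ^ 2 + α * ‖G (z 0)‖ ^ 2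
          ≤ α * β * (‖G (z 0)‖ * ‖z 0 - x‖) := by
        have h7 := mul_le_mul_of_nonneg_left hab (mul_pos hα hβ).le
        calc β * ‖z 0 - x‖ ^ 2 + α * ‖G (z 0)‖ ^ 2
            = α * β * ((1 / α) * ‖z 0 - x‖ ^ 2 + (1 / β) * ‖G (z 0)‖ ^ 2) := by
              field_simp
          _ ≤ α * β * (‖G (z 0)‖ * ‖z 0 - x‖) := h7
      have hαβ : 4 ≤ α * β := by
        nlinarith [mul_self_le_mul_self
            (by positivity : (0:ℝ) ≤ β * ‖z 0 - x‖ ^ 2 + α * ‖G (z 0)‖ ^ 2) hab',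
          sq_nonneg (β * ‖z 0 - x‖ ^ 2 - α * ‖G (z 0)‖ ^ 2),
          mul_pos (mul_pos hα hβ) (mul_pos (pow_pos ha 2) (pow_pos hbpos 2))]
      have hμ' : μ * β ≤ 2 := (le_div_iff₀ hβ).mp hμ
      have h2μ : 2 * μ ≤ α := by nlinarith
      have : 2 * μ / α ≤ 1 := by rw [div_le_one hα]; linarith
      linarith
    have hc1 : 1 - 2 * μ / α ≤ 1 := by
      have : 0 < 2 * μ / α := by positivity
      linarith
    intro τ
    induction τ with
    | zero => exact ⟨⟨hz0K, hz0⟩, by simp⟩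
    | succ k ih =>
      obtain ⟨⟨hzK, hzε⟩, hbound⟩ := ih
      obtain ⟨hpK, hmin⟩ := hiter k
      have hcontr : ‖z (k+1) - x‖ ≤ ‖(z k - μ • G (z k)) - x‖ :=
        proj_contract hKcvx hx hpK hmin
      have hstep : ‖z (k+1) - x‖ ^ 2 ≤ (1 - 2 * μ / α) * ‖z k - x‖ ^ 2 := by
        have h1 := key (z k) hzK hzε
        have h2 : ‖z (k+1) - x‖ ^ 2 ≤ ‖(z k - μ • G (z k)) - x‖ ^ 2 := by
          nlinarith [norm_nonneg (z (k+1) - x), norm_nonneg ((z k - μ • G (z k)) - x)]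
        linarith
      have hnext : ‖z (k+1) - x‖ ^ 2 ≤ (1 - 2 * μ / α) ^ (k+1) * ‖z 0 - x‖ ^ 2 := by
        calc ‖z (k+1) - x‖ ^ 2 ≤ (1 - 2 * μ / α) * ‖z k - x‖ ^ 2 := hstep
          _ ≤ (1 - 2 * μ / α) * ((1 - 2 * μ / α) ^ k * ‖z 0 - x‖ ^ 2) := by
              exact mul_le_mul_of_nonneg_left hbound hc
          _ = (1 - 2 * μ / α) ^ (k+1) * ‖z 0 - x‖ ^ 2 := by ring
      have hεnext : ‖z (k+1) - x‖ ≤ ε := by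
        have hck : (1 - 2 * μ / α) ^ (k+1) ≤ 1 := pow_le_one₀ hc hc1
        have hle : ‖z (k+1) - x‖ ^ 2 ≤ ε ^ 2 := by
          have h0 : ‖z 0 - x‖ ^ 2 ≤ ε ^ 2 := by
            nlinarith [norm_nonneg (z 0 - x)]
          nlinarith [sq_nonneg ‖z 0 - x‖]
        nlinarith [norm_nonneg (z (k+1) - x)]
      exact ⟨⟨hpK, hεnext⟩, hnext⟩
end

section
/- Let D ⊆ ℝ^n be a nonempty closed set containing 0, and let C ⊆ ℝ^n be a nonempty closed cone with D ⊆ C. Fix v ∈ ℝ^n, let p_D be any nearest point of D to v and p_C any nearest point of C to v (in Euclidean norm). Then ‖p_D‖₂ ≤ 2 ‖p_C‖₂. If moreover D is convex, then ‖p_D‖₂ ≤ ‖p_C‖₂. -/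
open MeasureTheory ProbabilityTheory Real
open scoped ENNReal RealInnerProductSpace BigOperators

private lemma auxsq (x c X : ℝ) (hc : 0 < c)
    (h : X - 2 * x + c ≤ X - 2 * (x / c) * x + (x / c) ^ 2 * c) : x = c := by
  have hne : c ≠ 0 := ne_of_gt hc
  have e : (X - 2 * (x / c) * x + (x / c) ^ 2 * c) * c = X * c - x ^ 2 := by
    field_simp; ring
  have h' := mul_le_mul_of_nonneg_right h hc.le
  rw [e] at h'
  have h2 : (x - c) ^ 2 ≤ 0 := by nlinarith [h']
  have h3 : (x - c) ^ 2 = 0 := le_antisymm h2 (sq_nonneg _)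
  have := pow_eq_zero_iff (n := 2) (by norm_num) |>.mp h3
  linarith [sub_eq_zero.mp this]

private lemma aux2 (x y cC cD X : ℝ) (hcD : 0 < cD) (hy : y ≤ cC)
    (h : X - 2 * y + cC ≤ X - 2 * (x / cD) * x + (x / cD) ^ 2 * cD) :
    x ^ 2 ≤ cC * cD := by
  have hne : cD ≠ 0 := ne_of_gt hcD
  have e : (X - 2 * (x / cD) * x + (x / cD) ^ 2 * cD) * cD = X * cD - x ^ 2 := by
    field_simp; ring
  have h' := mul_le_mul_of_nonneg_right h hcD.le
  rw [e] at h'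
  nlinarith [h', mul_le_mul_of_nonneg_right hy hcD.le]

/-- Lemma: comparison of projections onto a set and onto a cone containing
it. -/
theorem statement13 (n : ℕ) (D C : Set (EuclideanSpace ℝ (Fin n)))
    (hDne : D.Nonempty) (hDcl : IsClosed D) (hD0 : (0 : EuclideanSpace ℝ (Fin n)) ∈ D)
    (hCne : C.Nonempty) (hCcl : IsClosed C) (hCcone : IsCone C) (hDC : D ⊆ C)
    (v pD pC : EuclideanSpace ℝ (Fin n))
    (hpD : NearestPt D v pD) (hpC : NearestPt C v pC) :
    ‖pD‖ ≤ 2 * ‖pC‖ ∧ (Convex ℝ D → ‖pD‖ ≤ ‖pC‖) := by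
  classical
  have expand : ∀ (t : ℝ) (p : EuclideanSpace ℝ (Fin n)),
      ‖v - t • p‖ ^ 2 = ‖v‖ ^ 2 - 2 * (t : ℝ) * ⟪v, p⟫ + t ^ 2 * ‖p‖ ^ 2 := by
    intro t p
    have h1 : ‖t • p‖ ^ 2 = t ^ 2 * ‖p‖ ^ 2 := by
      rw [norm_smul, mul_pow, Real.norm_eq_abs, sq_abs]
    rw [norm_sub_sq_real, real_inner_smul_right, h1]; ring
  have comp : ∀ w ∈ C, ‖v - pC‖ ^ 2 ≤ ‖v - w‖ ^ 2 := fun w hw =>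
    pow_le_pow_left₀ (norm_nonneg _) (hpC.2 w hw) 2
  have compD : ∀ w ∈ D, ‖v - pD‖ ^ 2 ≤ ‖v - w‖ ^ 2 := fun w hw =>
    pow_le_pow_left₀ (norm_nonneg _) (hpD.2 w hw) 2
  have expC : ‖v - pC‖ ^ 2 = ‖v‖ ^ 2 - 2 * ⟪v, pC⟫ + ‖pC‖ ^ 2 := by
    have := expand 1 pC; simpa using this
  have expD : ‖v - pD‖ ^ 2 = ‖v‖ ^ 2 - 2 * ⟪v, pD⟫ + ‖pD‖ ^ 2 := by
    have := expand 1 pD; simpa using this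
  have h0D : ‖pD‖ ^ 2 ≤ 2 * ⟪v, pD⟫ := by
    have h := compD 0 hD0
    rw [expD] at h
    simp only [sub_zero] at h
    nlinarith [h]
  have hble : ⟪v, pC⟫ ≤ ‖pC‖ ^ 2 := by
    by_cases hpC0 : pC = 0
    · simp [hpC0]
    · have hnC : 0 < ‖pC‖ ^ 2 := pow_pos (norm_pos_iff.mpr hpC0) 2
      by_cases hbpos : 0 ≤ ⟪v, pC⟫
      · have ht : (0 : ℝ) ≤ ⟪v, pC⟫ / ‖pC‖ ^ 2 := div_nonneg hbpos hnC.le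
        have h1 := comp _ (hCcone _ ht pC hpC.1)
        rw [expand, expC] at h1
        exact le_of_eq (auxsq _ _ _ hnC h1)
      · nlinarith
  have hkey : ⟪v, pD⟫ ≤ ‖pC‖ * ‖pD‖ := by
    by_cases hapos : ⟪v, pD⟫ ≤ 0
    · exact le_trans hapos (by positivity)
    · push_neg at hapos
      have hpD0 : pD ≠ 0 := by
        intro h; rw [h] at hapos; simp at hapos
      have hnD : 0 < ‖pD‖ ^ 2 := pow_pos (norm_pos_iff.mpr hpD0) 2
      have ht : (0 : ℝ) ≤ ⟪v, pD⟫ / ‖pD‖ ^ 2 := div_nonneg hapos.le hnD.le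
      have h1 := comp _ (hCcone _ ht pD (hDC hpD.1))
      rw [expand, expC] at h1
      have h2 := aux2 _ _ _ _ _ hnD hble h1
      nlinarith [h2, hapos, mul_nonneg (norm_nonneg pC) (norm_nonneg pD)]
  constructor
  · rcases eq_or_ne pD 0 with h | h
    · rw [h, norm_zero]; positivity
    · have hp : 0 < ‖pD‖ := norm_pos_iff.mpr h
      nlinarith [h0D, hkey, hp]
  · intro hconv
    rcases eq_or_ne pD 0 with h | h
    · rw [h, norm_zero]; positivity
    · have hnpD : 0 < ‖pD‖ := norm_pos_iff.mpr h
      have hnD : 0 < ‖pD‖ ^ 2 := pow_pos hnpD 2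
      have haD : ‖pD‖ ^ 2 ≤ ⟪v, pD⟫ := by
        by_contra hlt
        push_neg at hlt
        have hapos : 0 < ⟪v, pD⟫ := by nlinarith [h0D]
        have ht0 : (0 : ℝ) ≤ ⟪v, pD⟫ / ‖pD‖ ^ 2 := div_nonneg hapos.le hnD.le
        have ht1 : ⟪v, pD⟫ / ‖pD‖ ^ 2 ≤ 1 := by
          rw [div_le_one hnD]; linarith
        have hmem : (⟪v, pD⟫ / ‖pD‖ ^ 2) • pD ∈ D := by
          have := hconv hD0 hpD.1 (sub_nonneg.mpr ht1) ht0 (by ring)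
          simpa only [smul_zero, zero_add] using this
        have h1 := compD _ hmem
        rw [expand, expD] at h1
        have := auxsq _ _ _ hnD h1
        linarith
      nlinarith [hkey, haD, hnpD]
end

section
/- Fix Δ ∈ (0, 1). For h ∈ ℝ and β ≥ 0 define S(h; β) = 0 if |h| < β(1−Δ); S(h; β) = (1/Δ)(|h| − β(1−Δ)) if β(1−Δ) ≤ |h| ≤ β; and S(h; β) = |h| if |h| > β. For z ∈ ℝ^m and β ∈ ℝ^m with nonnegative entries define f(z; β) = sqrt(Σ_{r=1}^m S(z_r; β_r)²). Then f(·; β) is Lipschitz with constant 1/Δ: for all z, y ∈ ℝ^m, |f(z; β) − f(y; β)| ≤ (1/Δ) ‖z − y‖₂. -/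
open MeasureTheory ProbabilityTheory Real
open scoped ENNReal RealInnerProductSpace BigOperators

/-- The soft truncation map `S(h; β)` with parameter `Δ`. -/
noncomputable def Sfun (Δ h β : ℝ) : ℝ :=
  if |h| < β * (1 - Δ) then 0
  else if |h| ≤ β then (1 / Δ) * (|h| - β * (1 - Δ))
  else |h|


lemma Sfun_eq (Δ h β : ℝ) (hΔ0 : 0 < Δ) (hΔ1 : Δ < 1) (hβ : 0 ≤ β) :
    Sfun Δ h β = min |h| (max 0 ((|h| - β * (1 - Δ)) / Δ)) := by
  unfold Sfun
  split_ifs with h1 h2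
  · rw [max_eq_left, min_eq_right (abs_nonneg h)]
    apply div_nonpos_of_nonpos_of_nonneg (by linarith) hΔ0.le
  · push_neg at h1
    rw [max_eq_right, min_eq_right, one_div, inv_mul_eq_div]
    · rw [div_le_iff₀ hΔ0]; nlinarith [abs_nonneg h]
    · exact div_nonneg (by linarith) hΔ0.le
  · push_neg at h1 h2
    have hx : |h| ≤ (|h| - β * (1 - Δ)) / Δ := by
      rw [le_div_iff₀ hΔ0]; nlinarith
    rw [max_eq_right (le_trans (abs_nonneg h) hx), min_eq_left hx]

lemma Sfun_lip (Δ β a b : ℝ) (hΔ0 : 0 < Δ) (hΔ1 : Δ < 1) (hβ : 0 ≤ β) :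
    |Sfun Δ a β - Sfun Δ b β| ≤ (1 / Δ) * |a - b| := by
  rw [Sfun_eq Δ a β hΔ0 hΔ1 hβ, Sfun_eq Δ b β hΔ0 hΔ1 hβ]
  have key : |(|a| - |b|)| ≤ |a - b| := abs_abs_sub_abs_le_abs_sub a b
  have h1 : (1 : ℝ) ≤ 1 / Δ := by
    rw [le_div_iff₀ hΔ0]; linarith
  refine le_trans (abs_min_sub_min_le_max _ _ _ _) (max_le ?_ ?_)
  · nlinarith [abs_nonneg (a - b)]
  · refine le_trans (abs_max_sub_max_le_max _ _ _ _) (max_le ?_ ?_)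
    · simpa using mul_nonneg (le_trans zero_le_one h1) (abs_nonneg (a - b))
    · rw [div_sub_div_same, abs_div, abs_of_pos hΔ0, div_le_iff₀ hΔ0,
        mul_comm (1 / Δ), mul_assoc]
      rw [one_div, inv_mul_cancel₀ hΔ0.ne', mul_one]
      ring_nf
      exact key

/-- Lemma: `f(·; β)` is `1/Δ`-Lipschitz. -/
theorem statement15 (Δ : ℝ) (hΔ : Δ ∈ Set.Ioo (0 : ℝ) 1) (m : ℕ)
    (β : Fin m → ℝ) (hβ : ∀ r, 0 ≤ β r) (z y : EuclideanSpace ℝ (Fin m)) :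
    |Real.sqrt (∑ r, Sfun Δ (z r) (β r) ^ 2) -
        Real.sqrt (∑ r, Sfun Δ (y r) (β r) ^ 2)|
      ≤ (1 / Δ) * ‖z - y‖ := by
  have hΔ0 := hΔ.1
  have hΔ1 := hΔ.2
  set A : EuclideanSpace ℝ (Fin m) := WithLp.toLp 2 (fun r => Sfun Δ (z r) (β r)) with hA
  set B : EuclideanSpace ℝ (Fin m) := WithLp.toLp 2 (fun r => Sfun Δ (y r) (β r)) with hB
  have hnA : Real.sqrt (∑ r, Sfun Δ (z r) (β r) ^ 2) = ‖A‖ := by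
    rw [EuclideanSpace.norm_eq]
    congr 1; apply Finset.sum_congr rfl; intro r _
    rw [Real.norm_eq_abs, sq_abs]
  have hnB : Real.sqrt (∑ r, Sfun Δ (y r) (β r) ^ 2) = ‖B‖ := by
    rw [EuclideanSpace.norm_eq]
    congr 1; apply Finset.sum_congr rfl; intro r _
    rw [Real.norm_eq_abs, sq_abs]
  rw [hnA, hnB]
  refine le_trans (abs_norm_sub_norm_le A B) ?_
  rw [EuclideanSpace.norm_eq, EuclideanSpace.norm_eq]
  have hstep : ∑ r, ‖(A - B) r‖ ^ 2 ≤ ∑ r, (1 / Δ)^2 * ‖(z - y) r‖ ^ 2 := by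
    apply Finset.sum_le_sum
    intro r _
    have hl := Sfun_lip Δ (β r) (z r) (y r) hΔ0 hΔ1 (hβ r)
    have hAB : (A - B) r = Sfun Δ (z r) (β r) - Sfun Δ (y r) (β r) := rfl
    have hzy : (z - y) r = z r - y r := rfl
    rw [hAB, hzy, Real.norm_eq_abs, Real.norm_eq_abs, sq_abs]
    have h2 : |Sfun Δ (z r) (β r) - Sfun Δ (y r) (β r)|^2 ≤ (1 / Δ * |z r - y r|)^2 :=
      pow_le_pow_left₀ (abs_nonneg _) hl 2
    calc (Sfun Δ (z r) (β r) - Sfun Δ (y r) (β r))^2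
        = |Sfun Δ (z r) (β r) - Sfun Δ (y r) (β r)|^2 := (sq_abs _).symm
      _ ≤ (1 / Δ * |z r - y r|)^2 := h2
      _ = (1 / Δ)^2 * |z r - y r|^2 := by ring
  calc Real.sqrt (∑ r, ‖(A - B) r‖ ^ 2)
      ≤ Real.sqrt (∑ r, (1 / Δ)^2 * ‖(z - y) r‖ ^ 2) := Real.sqrt_le_sqrt hstep
    _ = (1 / Δ) * Real.sqrt (∑ r, ‖(z - y) r‖ ^ 2) := by
        rw [← Finset.mul_sum, Real.sqrt_mul (by positivity),
          Real.sqrt_sq (by positivity)]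
end

section
/- Fix Δ ∈ (0, 1). For h ∈ ℝ and β ≥ 0 define S(h; β) = 0 if |h| < β(1−Δ); S(h; β) = (1/Δ)(|h| − β(1−Δ)) if β(1−Δ) ≤ |h| ≤ β; and S(h; β) = |h| if |h| > β. For z ∈ ℝ^m and β ∈ ℝ^m with nonnegative entries define f(z; β) = sqrt(Σ_{r=1}^m S(z_r; β_r)²). Then f(·; β) is radially convex: for all z ∈ ℝ^m and all α ∈ [0, 1], f(α z; β) ≤ α f(z; β). -/
open MeasureTheory ProbabilityTheory Real
open scoped ENNReal RealInnerProductSpace BigOperators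

lemma Sfun_nonneg (Δ h β : ℝ) (hΔ : 0 < Δ) (hβ : 0 ≤ β) : 0 ≤ Sfun Δ h β := by
  unfold Sfun
  split_ifs with h1 h2
  · exact le_refl 0
  · push_neg at h1
    have := sub_nonneg.mpr h1
    positivity
  · exact abs_nonneg h

lemma Sfun_smul_le (Δ h β α : ℝ) (hΔ : Δ ∈ Set.Ioo (0:ℝ) 1) (hβ : 0 ≤ β)
    (hα : α ∈ Set.Icc (0:ℝ) 1) : Sfun Δ (α * h) β ≤ α * Sfun Δ h β := by
  obtain ⟨hΔ0, hΔ1⟩ := hΔ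
  obtain ⟨hα0, hα1⟩ := hα
  have habs : |α * h| = α * |h| := by rw [abs_mul, abs_of_nonneg hα0]
  have hβΔ : 0 ≤ β * (1 - Δ) := by nlinarith
  rw [Sfun, habs]
  split_ifs with h1 h2
  · exact mul_nonneg hα0 (Sfun_nonneg Δ h β hΔ0 hβ)
  · push_neg at h1
    have hh1 : β * (1 - Δ) ≤ |h| := by nlinarith [abs_nonneg h]
    rw [Sfun, if_neg (not_lt.mpr hh1)]
    split_ifs with h3
    · rw [div_mul_eq_mul_div, one_mul, div_le_iff₀ hΔ0]
      have : α * ((1 / Δ) * (|h| - β * (1 - Δ))) * Δ = α * (|h| - β * (1 - Δ)) := by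
        field_simp
      rw [this]; nlinarith
    · push_neg at h3
      rw [div_mul_eq_mul_div, one_mul, div_le_iff₀ hΔ0]
      nlinarith
  · push_neg at h1 h2
    have hhβ : β < |h| := by
      by_contra hc
      push_neg at hc
      nlinarith
    rw [Sfun, if_neg, if_neg (not_le.mpr hhβ)]
    push_neg
    calc β * (1 - Δ) ≤ β := by nlinarith
    _ ≤ |h| := le_of_lt hhβ

/-- Lemma: `f(·; β)` is radially convex. -/
theorem statement16 (Δ : ℝ) (hΔ : Δ ∈ Set.Ioo (0 : ℝ) 1) (m : ℕ)
    (β : Fin m → ℝ) (hβ : ∀ r, 0 ≤ β r) (z : Fin m → ℝ)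
    (α : ℝ) (hα : α ∈ Set.Icc (0 : ℝ) 1) :
    Real.sqrt (∑ r, Sfun Δ (α * z r) (β r) ^ 2)
      ≤ α * Real.sqrt (∑ r, Sfun Δ (z r) (β r) ^ 2) := by
  obtain ⟨hα0, hα1⟩ := hα
  have key : ∑ r, Sfun Δ (α * z r) (β r) ^ 2 ≤ α ^ 2 * ∑ r, Sfun Δ (z r) (β r) ^ 2 := by
    rw [Finset.mul_sum]
    refine Finset.sum_le_sum fun r _ => ?_
    have h1 := Sfun_smul_le Δ (z r) (β r) α hΔ (hβ r) ⟨hα0, hα1⟩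
    have h2 := Sfun_nonneg Δ (α * z r) (β r) hΔ.1 (hβ r)
    nlinarith
  calc Real.sqrt (∑ r, Sfun Δ (α * z r) (β r) ^ 2)
      ≤ Real.sqrt (α ^ 2 * ∑ r, Sfun Δ (z r) (β r) ^ 2) := Real.sqrt_le_sqrt key
    _ = α * Real.sqrt (∑ r, Sfun Δ (z r) (β r) ^ 2) := by
        rw [Real.sqrt_mul (by positivity), Real.sqrt_sq hα0]
end
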